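/- Let D = (P, B) be a 3-(v,k,1) design admitting a block-transitive group G of automorphisms, and let H be a nontrivial subgroup of G having an orbit on P of length at least 3. Then the number of points of P fixed by every element of H satisfies |Fix_P(H)| ≤ 2(v-k)/(k-2) + k - 2. -/

import Mathlib

theorem block_transitive_fixed_points_bound
    (P : Type*) [Fintype P] [DecidableEq P]
    (𝓑 : Finset (Finset P)) (v k : ℕ)
    (hv : Fintype.card P = v)
    (hk3 : 3 ≤ k) (hkv : k ≤ v)
    (hblocks : ∀ b ∈ 𝓑, b.card = k)
    (hdesign : ∀ s : Finset P, s.card = 3 →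
      (𝓑.filter (fun b => s ⊆ b)).card = 1)
    (G : Type*) [Group G] [Finite G] [MulAction G P] [FaithfulSMul G P]
    (hpres : ∀ (g : G), ∀ b ∈ 𝓑, b.image (fun x => g • x) ∈ 𝓑)
    (htrans : ∀ b₁ ∈ 𝓑, ∀ b₂ ∈ 𝓑, ∃ g : G, b₁.image (fun x => g • x) = b₂)
    (H : Subgroup G) (hH : H ≠ ⊥)
    (horb : ∃ α : P, 3 ≤ (MulAction.orbit H α).ncard) :
    (({α : P | ∀ h ∈ H, h • α = α}.ncard : ℚ)) ≤
      2 * ((v : ℚ) - k) / ((k : ℚ) - 2) + (k : ℚ) - 2 := by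
  classical
  -- the fixed point set as a Finset
  set F : Finset P := Finset.univ.filter (fun a => ∀ h ∈ H, h • a = a) with hFdef
  have hFset : {α : P | ∀ h ∈ H, h • α = α} = ↑F := by
    ext a; simp [hFdef]
  rw [hFset, Set.ncard_coe_finset]
  have hmemF : ∀ a : P, a ∈ F ↔ ∀ h ∈ H, h • a = a := by
    intro a; simp [hFdef]
  -- basic rational facts
  have hk2Q : (2:ℚ) < (k:ℚ) := by exact_mod_cast (by omega : 2 < k)
  have hkvQ : (k:ℚ) ≤ (v:ℚ) := by exact_mod_cast hkv
  have hkne : (k:ℚ) - 2 ≠ 0 := by linarith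
  -- uniqueness of the block through a 3-set
  have uniq : ∀ s b₁ b₂ : Finset P, s.card = 3 → b₁ ∈ 𝓑 → b₂ ∈ 𝓑 →
      s ⊆ b₁ → s ⊆ b₂ → b₁ = b₂ := by
    intro s b₁ b₂ hs h1 h2 hs1 hs2
    obtain ⟨c, hc⟩ := Finset.card_eq_one.1 (hdesign s hs)
    have m1 : b₁ ∈ 𝓑.filter (fun b => s ⊆ b) := Finset.mem_filter.2 ⟨h1, hs1⟩
    have m2 : b₂ ∈ 𝓑.filter (fun b => s ⊆ b) := Finset.mem_filter.2 ⟨h2, hs2⟩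
    rw [hc, Finset.mem_singleton] at m1 m2
    rw [m1, m2]
  -- existence of the block through a 3-set
  have exb : ∀ s : Finset P, s.card = 3 → ∃ b ∈ 𝓑, s ⊆ b := by
    intro s hs
    obtain ⟨c, hc⟩ := Finset.card_eq_one.1 (hdesign s hs)
    have : c ∈ 𝓑.filter (fun b => s ⊆ b) := hc ▸ Finset.mem_singleton_self c
    exact ⟨c, (Finset.mem_filter.1 this).1, (Finset.mem_filter.1 this).2⟩
  -- extract three distinct orbit points
  obtain ⟨α, hα⟩ := horb
  have horbfin : (MulAction.orbit H α).ncard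
      = (MulAction.orbit H α).toFinset.card := Set.ncard_eq_toFinset_card' _
  rw [horbfin] at hα
  obtain ⟨O, hOsub, hOcard⟩ := Finset.exists_subset_card_eq hα
  obtain ⟨β₁, β₂, β₃, h12, h13, h23, hOeq⟩ := Finset.card_eq_three.1 hOcard
  have hmem : ∀ x ∈ O, x ∈ MulAction.orbit H α := by
    intro x hx; exact Set.mem_toFinset.1 (hOsub hx)
  have hβ₁o : β₁ ∈ MulAction.orbit H α := hmem β₁ (by rw [hOeq]; simp)
  have hβ₂o : β₂ ∈ MulAction.orbit H α := hmem β₂ (by rw [hOeq]; simp)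
  have hβ₃o : β₃ ∈ MulAction.orbit H α := hmem β₃ (by rw [hOeq]; simp)
  obtain ⟨g₁, hg₁⟩ := MulAction.mem_orbit_iff.1 hβ₁o
  obtain ⟨g₂, hg₂⟩ := MulAction.mem_orbit_iff.1 hβ₂o
  obtain ⟨g₃, hg₃⟩ := MulAction.mem_orbit_iff.1 hβ₃o
  -- elements of G carrying β₁ to β₂ and β₃
  have hmove : ∀ (a b : ↥H) (p q : P), a • α = p → b • α = q →
      ∃ h : G, h ∈ H ∧ h • p = q := by
    intro a b p q hp hq
    refine ⟨(b : G) * (a : G)⁻¹, by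
      exact mul_mem b.2 (inv_mem a.2), ?_⟩
    rw [← hp, Subgroup.smul_def, smul_smul, mul_assoc, inv_mul_cancel, mul_one,
      ← Subgroup.smul_def, hq]
  obtain ⟨h₂, hh₂H, hh₂⟩ := hmove g₁ g₂ β₁ β₂ hg₁ hg₂
  obtain ⟨h₃, hh₃H, hh₃⟩ := hmove g₁ g₃ β₁ β₃ hg₁ hg₃
  -- none of the βᵢ is fixed
  have hβ₁F : β₁ ∉ F := by
    rw [hmemF]; intro hfix; exact h12 (by rw [← hh₂, hfix h₂ hh₂H])
  have hβ₂F : β₂ ∉ F := by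
    rw [hmemF]; intro hfix
    exact h12 (by rw [← hfix h₂⁻¹ (inv_mem hh₂H), ← hh₂, inv_smul_smul])
  have hβ₃F : β₃ ∉ F := by
    rw [hmemF]; intro hfix
    exact h13 (by rw [← hfix h₃⁻¹ (inv_mem hh₃H), ← hh₃, inv_smul_smul])
  -- the special block through β₁ β₂ β₃
  have htβcard : ({β₁, β₂, β₃} : Finset P).card = 3 :=
    Finset.card_eq_three.2 ⟨β₁, β₂, β₃, h12, h13, h23, rfl⟩
  obtain ⟨bstar, hbstarB, hbstarsub⟩ := exb {β₁, β₂, β₃} htβcard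
  -- any block containing β₁ and ≥ 3 fixed points equals bstar
  have key : ∀ b ∈ 𝓑, β₁ ∈ b → 2 < (b ∩ F).card → b = bstar := by
    intro b hb hβ₁b hcard
    obtain ⟨t, htsub, htcard⟩ := Finset.exists_subset_card_eq hcard
    have hinv : ∀ g ∈ H, b.image (fun p => g • p) = b := by
      intro g hg
      refine uniq t _ _ htcard (hpres g b hb) hb ?_ (fun z hz => (Finset.mem_inter.1 (htsub hz)).1)
      intro z hz
      have hzF : z ∈ F := (Finset.mem_inter.1 (htsub hz)).2
      exact Finset.mem_image.2 ⟨z, (Finset.mem_inter.1 (htsub hz)).1,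
        (hmemF z).1 hzF g hg⟩
    have hβ₂b : β₂ ∈ b := by
      rw [← hinv h₂ hh₂H]; exact Finset.mem_image.2 ⟨β₁, hβ₁b, hh₂⟩
    have hβ₃b : β₃ ∈ b := by
      rw [← hinv h₃ hh₃H]; exact Finset.mem_image.2 ⟨β₁, hβ₁b, hh₃⟩
    refine uniq {β₁, β₂, β₃} b bstar htβcard hb hbstarB ?_ hbstarsub
    intro z hz
    simp only [Finset.mem_insert, Finset.mem_singleton] at hz
    rcases hz with rfl | rfl | rfl <;> assumption
  -- bstar has at most k - 3 fixed points
  have hbstarF : (bstar ∩ F).card + 3 ≤ k := by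
    have hsub : bstar ∩ F ⊆ bstar \ {β₁, β₂, β₃} := by
      intro z hz
      obtain ⟨hz1, hz2⟩ := Finset.mem_inter.1 hz
      refine Finset.mem_sdiff.2 ⟨hz1, ?_⟩
      simp only [Finset.mem_insert, Finset.mem_singleton]
      push_neg
      refine ⟨?_, ?_, ?_⟩ <;> rintro rfl <;> [exact hβ₁F hz2; exact hβ₂F hz2; exact hβ₃F hz2]
    have := Finset.card_le_card hsub
    rw [Finset.card_sdiff_of_subset hbstarsub, htβcard, hblocks bstar hbstarB] at this
    omega
  -- now the main counting, assuming F is nonempty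
  rcases F.eq_empty_or_nonempty with hFe | ⟨x, hxF⟩
  · rw [hFe]
    simp only [Finset.card_empty, Nat.cast_zero]
    have : 0 ≤ 2 * ((v:ℚ) - k) / ((k:ℚ) - 2) := by
      apply div_nonneg <;> linarith
    linarith
  · have hxfix : ∀ h ∈ H, h • x = x := (hmemF x).1 hxF
    have hxβ₁ : x ≠ β₁ := by rintro rfl; exact hβ₁F hxF
    have hxβ₂ : x ≠ β₂ := by rintro rfl; exact hβ₂F hxF
    have hxβ₃ : x ≠ β₃ := by rintro rfl; exact hβ₃F hxF
    -- blocks through x and β₁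
    set S : Finset (Finset P) := 𝓑.filter (fun b => x ∈ b ∧ β₁ ∈ b) with hSdef
    have hmemS : ∀ b, b ∈ S ↔ b ∈ 𝓑 ∧ x ∈ b ∧ β₁ ∈ b := by
      intro b; simp [hSdef]
    have hpairxβ : ({x, β₁} : Finset P).card = 2 := by
      rw [Finset.card_insert_of_notMem (by simpa using hxβ₁), Finset.card_singleton]
    -- the unique block of S through any z ∉ {x, β₁}
    have hthrough : ∀ z : P, z ≠ x → z ≠ β₁ → ∃ b ∈ S, z ∈ b ∧
        ∀ b' ∈ S, z ∈ b' → b' = b := by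
      intro z hzx hzβ
      have hc3 : ({x, β₁, z} : Finset P).card = 3 :=
        Finset.card_eq_three.2 ⟨x, β₁, z, hxβ₁, hzx.symm, hzβ.symm, rfl⟩
      obtain ⟨b, hbB, hbsub⟩ := exb {x, β₁, z} hc3
      refine ⟨b, (hmemS b).2 ⟨hbB, hbsub (by simp), hbsub (by simp)⟩, hbsub (by simp), ?_⟩
      intro b' hb' hzb'
      obtain ⟨hb'B, hxb', hβb'⟩ := (hmemS b').1 hb'
      refine uniq {x, β₁, z} b' b hc3 hb'B hbB ?_ hbsub
      intro w hw
      simp only [Finset.mem_insert, Finset.mem_singleton] at hw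
      rcases hw with rfl | rfl | rfl <;> assumption
    -- disjointness of the two biUnions
    have hdisj1 : ∀ b₁ ∈ S, ∀ b₂ ∈ S, b₁ ≠ b₂ →
        Disjoint (b₁ \ {x, β₁}) (b₂ \ {x, β₁}) := by
      intro b₁ hb₁ b₂ hb₂ hne
      rw [Finset.disjoint_left]
      intro z hz1 hz2
      obtain ⟨hzb₁, hz'⟩ := Finset.mem_sdiff.1 hz1
      obtain ⟨hzb₂, _⟩ := Finset.mem_sdiff.1 hz2
      simp only [Finset.mem_insert, Finset.mem_singleton] at hz'
      push_neg at hz'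
      obtain ⟨b, hbS, hzb, hub⟩ := hthrough z hz'.1 hz'.2
      exact hne ((hub b₁ hb₁ hzb₁).trans (hub b₂ hb₂ hzb₂).symm)
    -- first count: |S| * (k-2) = v - 2
    have hcount1 : Finset.univ \ ({x, β₁} : Finset P) = S.biUnion (fun b => b \ {x, β₁}) := by
      ext z
      constructor
      · intro hz
        have hznot := (Finset.mem_sdiff.1 hz).2
        have hz' := hznot
        simp only [Finset.mem_insert, Finset.mem_singleton] at hz'
        push_neg at hz'
        obtain ⟨b, hbS, hzb, _⟩ := hthrough z hz'.1 hz'.2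
        exact Finset.mem_biUnion.2 ⟨b, hbS, Finset.mem_sdiff.2 ⟨hzb, hznot⟩⟩
      · intro hz
        obtain ⟨b, hbS, hzb⟩ := Finset.mem_biUnion.1 hz
        exact Finset.mem_sdiff.2 ⟨Finset.mem_univ z, (Finset.mem_sdiff.1 hzb).2⟩
    have hScount : S.card * (k - 2) = v - 2 := by
      have h1 : (Finset.univ \ ({x, β₁} : Finset P)).card = v - 2 := by
        rw [Finset.card_sdiff_of_subset (Finset.subset_univ _), Finset.card_univ, hv, hpairxβ]
      rw [hcount1, Finset.card_biUnion hdisj1] at h1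
      rw [← h1]
      rw [Finset.sum_congr rfl (fun b hb => ?_), Finset.sum_const, smul_eq_mul]
      obtain ⟨hbB, hxb, hβb⟩ := (hmemS b).1 hb
      rw [Finset.card_sdiff_of_subset (by intro w hw; simp only [Finset.mem_insert, Finset.mem_singleton] at hw; rcases hw with rfl | rfl <;> assumption),
        hblocks b hbB, hpairxβ]
    -- S is nonempty
    have hS1 : 1 ≤ S.card := by
      rcases Nat.eq_zero_or_pos S.card with h0 | h; · rw [h0] at hScount; omega
      · exact h
    -- second count: F.erase x = ⋃_{b ∈ S} (b ∩ F).erase x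
    have hdisj2 : ∀ b₁ ∈ S, ∀ b₂ ∈ S, b₁ ≠ b₂ →
        Disjoint ((b₁ ∩ F).erase x) ((b₂ ∩ F).erase x) := by
      intro b₁ hb₁ b₂ hb₂ hne
      rw [Finset.disjoint_left]
      intro z hz1 hz2
      obtain ⟨hzx, hz1'⟩ := Finset.mem_erase.1 hz1
      obtain ⟨_, hz2'⟩ := Finset.mem_erase.1 hz2
      have hzF : z ∈ F := (Finset.mem_inter.1 hz1').2
      have hzβ : z ≠ β₁ := by rintro rfl; exact hβ₁F hzF
      obtain ⟨b, hbS, hzb, hub⟩ := hthrough z hzx hzβ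
      exact hne ((hub b₁ hb₁ (Finset.mem_inter.1 hz1').1).trans
        (hub b₂ hb₂ (Finset.mem_inter.1 hz2').1).symm)
    have hcount2 : F.erase x = S.biUnion (fun b => (b ∩ F).erase x) := by
      ext z
      simp only [Finset.mem_erase, Finset.mem_biUnion, Finset.mem_inter]
      constructor
      · rintro ⟨hzx, hzF⟩
        have hzβ : z ≠ β₁ := by rintro rfl; exact hβ₁F hzF
        obtain ⟨b, hbS, hzb, _⟩ := hthrough z hzx hzβ
        exact ⟨b, hbS, hzx, hzb, hzF⟩
      · rintro ⟨b, hbS, hzx, hzb, hzF⟩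
        exact ⟨hzx, hzF⟩
    have hsum : (F.erase x).card = ∑ b ∈ S, ((b ∩ F).erase x).card := by
      rw [hcount2, Finset.card_biUnion hdisj2]
    have hfcard : (F.erase x).card + 1 = F.card := Finset.card_erase_add_one hxF
    -- each non-bstar block of S contributes ≤ 1
    have hterm : ∀ b ∈ S, b ≠ bstar → ((b ∩ F).erase x).card ≤ 1 := by
      intro b hbS hne
      obtain ⟨hbB, hxb, hβb⟩ := (hmemS b).1 hbS
      have h2 : (b ∩ F).card ≤ 2 := by
        by_contra hgt
        exact hne (key b hbB hβb (by omega))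
      have := Finset.card_erase_add_one (Finset.mem_inter.2 ⟨hxb, hxF⟩)
      omega
    -- final case split
    by_cases hbS : bstar ∈ S
    · -- bstar goes through x : F.card + 4 ≤ k + S.card
      have hsplit : ∑ b ∈ S.erase bstar, ((b ∩ F).erase x).card
          + ((bstar ∩ F).erase x).card = ∑ b ∈ S, ((b ∩ F).erase x).card :=
        Finset.sum_erase_add S _ hbS
      have hbound : ∑ b ∈ S.erase bstar, ((b ∩ F).erase x).card ≤ (S.erase bstar).card := by
        calc ∑ b ∈ S.erase bstar, ((b ∩ F).erase x).card
            ≤ (S.erase bstar).card • 1 := Finset.sum_le_card_nsmul _ _ 1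
              (fun b hb => hterm b (Finset.mem_of_mem_erase hb)
                (Finset.ne_of_mem_erase hb))
          _ = (S.erase bstar).card := by rw [smul_eq_mul, mul_one]
      have hScarderase : (S.erase bstar).card + 1 = S.card := Finset.card_erase_add_one hbS
      have hxbstar : x ∈ bstar ∩ F :=
        Finset.mem_inter.2 ⟨((hmemS bstar).1 hbS).2.1, hxF⟩
      have hbstarterm : ((bstar ∩ F).erase x).card + 1 = (bstar ∩ F).card :=
        Finset.card_erase_add_one hxbstar
      have hmain : F.card + 4 ≤ k + S.card := by omega
      -- cast to ℚ
      have hmainQ : (F.card : ℚ) + 4 ≤ (k : ℚ) + (S.card : ℚ) := by exact_mod_cast hmain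
      have hScountQ : (S.card : ℚ) * ((k:ℚ) - 2) = (v:ℚ) - 2 := by
        have := hScount
        have h2k : ((k - 2 : ℕ) : ℚ) = (k:ℚ) - 2 := by
          push_cast [Nat.cast_sub (by omega : 2 ≤ k)]; ring
        have h2v : ((v - 2 : ℕ) : ℚ) = (v:ℚ) - 2 := by
          push_cast [Nat.cast_sub (by omega : 2 ≤ v)]; ring
        calc (S.card : ℚ) * ((k:ℚ) - 2) = ((S.card * (k - 2) : ℕ) : ℚ) := by
              push_cast [h2k]; ring
          _ = (v:ℚ) - 2 := by rw [hScount, h2v]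
      have hdiv : 2 * ((v:ℚ) - k) / ((k:ℚ) - 2) = 2 * ((S.card : ℚ) - 1) := by
        rw [show (v:ℚ) - k = ((S.card:ℚ) - 1) * ((k:ℚ) - 2) by nlinarith [hScountQ]]
        field_simp
      rw [hdiv]
      have hS1Q : (1:ℚ) ≤ (S.card : ℚ) := by exact_mod_cast hS1
      linarith
    · -- bstar not through x and β₁ : F.card ≤ S.card + 1
      have hbound : ∑ b ∈ S, ((b ∩ F).erase x).card ≤ S.card := by
        calc ∑ b ∈ S, ((b ∩ F).erase x).card
            ≤ S.card • 1 := Finset.sum_le_card_nsmul _ _ 1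
              (fun b hb => hterm b hb (fun he => hbS (he ▸ hb)))
          _ = S.card := by rw [smul_eq_mul, mul_one]
      have hmain : F.card ≤ S.card + 1 := by omega
      -- rule out the degenerate case v = 3
      have hmain5 : 5 ≤ S.card + k := by
        by_contra hlt
        push_neg at hlt
        have hS1' : S.card = 1 := by omega
        have hk3' : k = 3 := by omega
        have hv3 : v = 3 := by rw [hS1', hk3'] at hScount; omega
        have huniv : ({β₁, β₂, β₃} : Finset P) = Finset.univ :=
          Finset.eq_univ_of_card _ (by rw [htβcard, hv, hv3])
        have : x ∈ ({β₁, β₂, β₃} : Finset P) := huniv ▸ Finset.mem_univ x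
        simp only [Finset.mem_insert, Finset.mem_singleton] at this
        rcases this with rfl | rfl | rfl
        · exact hβ₁F hxF
        · exact hβ₂F hxF
        · exact hβ₃F hxF
      have hmainQ : (F.card : ℚ) ≤ (S.card : ℚ) + 1 := by exact_mod_cast hmain
      have hmain5Q : (5:ℚ) ≤ (S.card : ℚ) + (k:ℚ) := by exact_mod_cast hmain5
      have hScountQ : (S.card : ℚ) * ((k:ℚ) - 2) = (v:ℚ) - 2 := by
        have h2k : ((k - 2 : ℕ) : ℚ) = (k:ℚ) - 2 := by
          push_cast [Nat.cast_sub (by omega : 2 ≤ k)]; ring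
        have h2v : ((v - 2 : ℕ) : ℚ) = (v:ℚ) - 2 := by
          push_cast [Nat.cast_sub (by omega : 2 ≤ v)]; ring
        calc (S.card : ℚ) * ((k:ℚ) - 2) = ((S.card * (k - 2) : ℕ) : ℚ) := by
              push_cast [h2k]; ring
          _ = (v:ℚ) - 2 := by rw [hScount, h2v]
      have hdiv : 2 * ((v:ℚ) - k) / ((k:ℚ) - 2) = 2 * ((S.card : ℚ) - 1) := by
        rw [show (v:ℚ) - k = ((S.card:ℚ) - 1) * ((k:ℚ) - 2) by nlinarith [hScountQ]]
        field_simp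
      rw [hdiv]
      linarith
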